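/- Let N ≥ 2, let -1 ≤ τ_1 < τ_2 < … < τ_N = 1 be distinct points, let ω_N > 0, and let M be an invertible N×N real matrix with the Radau costate differentiation property. Then for every real polynomial p of degree at most N−1, M^{-1} ṗ = p − p(1)·1, where ṗ = (ṗ(τ_1),…,ṗ(τ_N)), p = (p(τ_1),…,p(τ_N)), and 1 is the all-ones vector. -/
import Mathlib


open Polynomial Matrix

/-- Let `N ≥ 2`, let `-1 ≤ τ_1 < … < τ_N = 1` be distinct
points, `ω_N > 0`, and let `M` be an invertible `N×N` matrix with the Radau
costate differentiation property: for every polynomial `p` of degree at most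
`N-1`, `(Mp)_i = ṗ(τ_i)` for `i < N` and `(Mp)_N = ṗ(1) − p(1)/ω_N`.
Then for every such `p`, `M⁻¹ ṗ = p − p(1)·𝟙`. -/
theorem radau_costate_inverse_action
    (N : ℕ) (hN : 2 ≤ N) (τ : Fin N → ℝ) (ωN : ℝ)
    (hmono : StrictMono τ)
    (hge : ∀ i, -1 ≤ τ i)
    (hlast : τ ⟨N - 1, by omega⟩ = 1)
    (hωN : 0 < ωN)
    (M : Matrix (Fin N) (Fin N) ℝ)
    (hMinv : IsUnit M)
    (hM : ∀ p : Polynomial ℝ, p.degree ≤ (N - 1 : ℕ) →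
      (∀ i : Fin N, (i : ℕ) < N - 1 →
        M.mulVec (fun j => p.eval (τ j)) i = (derivative p).eval (τ i)) ∧
      M.mulVec (fun j => p.eval (τ j)) ⟨N - 1, by omega⟩ =
        (derivative p).eval 1 - p.eval 1 / ωN) :
    ∀ p : Polynomial ℝ, p.degree ≤ (N - 1 : ℕ) →
      M⁻¹.mulVec (fun i => (derivative p).eval (τ i)) =
        fun i => p.eval (τ i) - p.eval 1 := by
  intro p hp
  set v : Fin N → ℝ := fun i => p.eval (τ i) - p.eval 1 with hv
  have h1 := hM p hp
  have hc : (C (p.eval 1) : ℝ[X]).degree ≤ ((N - 1 : ℕ) : WithBot ℕ) :=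
    le_trans degree_C_le (by exact_mod_cast Nat.zero_le _)
  have h2 := hM (C (p.eval 1)) hc
  have hsplit : v = (fun j => p.eval (τ j)) - (fun j => (C (p.eval 1) : ℝ[X]).eval (τ j)) := by
    funext j; simp [hv]
  have key : M.mulVec v = fun i => (derivative p).eval (τ i) := by
    funext i
    rw [hsplit, mulVec_sub]
    by_cases hi : (i : ℕ) < N - 1
    · simp only [Pi.sub_apply, h1.1 i hi, h2.1 i hi, derivative_C, eval_zero, sub_zero]
    · have hieq : (i : ℕ) = N - 1 := by have := i.isLt; omega
      have hi' : i = ⟨N - 1, by omega⟩ := Fin.ext (by simp [hieq])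
      rw [hi', Pi.sub_apply, h1.2, h2.2, hlast]
      simp only [derivative_C, eval_zero, eval_C, zero_sub]
      ring
  have hdet : IsUnit M.det := (Matrix.isUnit_iff_isUnit_det M).mp hMinv
  calc M⁻¹.mulVec (fun i => (derivative p).eval (τ i))
      = M⁻¹.mulVec (M.mulVec v) := by rw [key]
    _ = (M⁻¹ * M).mulVec v := by rw [mulVec_mulVec]
    _ = v := by rw [Matrix.nonsing_inv_mul M hdet, one_mulVec]
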